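/- There exists a two-layer ReLU encoder realizing the quadratic Veronese map in every column: there exist an h_1-headed ReLU attention module α_1 : ℝ^{n×p} → ℝ^{mh_1×p}, a one-layer ReLU feed-forward neural network φ_1 : ℝ^{mh_1×p} → ℝ^{n_1×p}, an h_2-headed ReLU attention module α_2 : ℝ^{n_1×p} → ℝ^{mh_2×p}, and a one-layer ReLU feed-forward neural network φ_2 : ℝ^{mh_2×p} → ℝ^{n_2×p}, such that ε_2 = φ_2 ∘ α_2 ∘ φ_1 ∘ α_1 satisfies, for every X ∈ ℝ^{n×p}, that ε_2(X) is the block-diagonal matrix with p diagonal blocks each equal to v_2(X) ∈ ℝ^{(np+2)(np+1)/2}, where v_2 is the quadratic Veronese map on the np entries of X. In particular, every monomial of degree not more than two in the entries of X appears in every column of ε_2(X). -/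

import Mathlib

noncomputable section

open Matrix

/-- The rectified linear unit. -/
def relu (x : ℝ) : ℝ := max x 0

/-- Entrywise ReLU of a matrix. -/
def matRelu {a b : ℕ} (M : Matrix (Fin a) (Fin b) ℝ) : Matrix (Fin a) (Fin b) ℝ :=
  Matrix.of fun i j => relu (M i j)

/-- The ReLU-activated attention module `α(X) = (A_V X + B_V) · ReLU((A_K X + B_K)ᵀ (A_Q X + B_Q))`. -/
def attention {n p d m : ℕ}
    (AQ AK : Matrix (Fin d) (Fin n) ℝ) (AV : Matrix (Fin m) (Fin n) ℝ)
    (BQ BK : Matrix (Fin d) (Fin p) ℝ) (BV : Matrix (Fin m) (Fin p) ℝ)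
    (X : Matrix (Fin n) (Fin p) ℝ) : Matrix (Fin m) (Fin p) ℝ :=
  (AV * X + BV) * matRelu ((AK * X + BK)ᵀ * (AQ * X + BQ))

/-- An `h`-headed ReLU attention module: `h` attention modules stacked vertically, giving a map
`ℝ^{n×p} → ℝ^{hm×p}`. -/
def multiheadAttention {n p d m h : ℕ}
    (AQ AK : Fin h → Matrix (Fin d) (Fin n) ℝ) (AV : Fin h → Matrix (Fin m) (Fin n) ℝ)
    (BQ BK : Fin h → Matrix (Fin d) (Fin p) ℝ) (BV : Fin h → Matrix (Fin m) (Fin p) ℝ)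
    (X : Matrix (Fin n) (Fin p) ℝ) : Matrix (Fin (h * m)) (Fin p) ℝ :=
  Matrix.of fun i j =>
    attention (AQ (finProdFinEquiv.symm i).1) (AK (finProdFinEquiv.symm i).1)
      (AV (finProdFinEquiv.symm i).1) (BQ (finProdFinEquiv.symm i).1)
      (BK (finProdFinEquiv.symm i).1) (BV (finProdFinEquiv.symm i).1) X
      (finProdFinEquiv.symm i).2 j

/-- A one-layer ReLU feed-forward neural network `φ(x) = A₂ ReLU(A₁ x + b₁) + b₂`. -/
def oneLayerNN {a b c : ℕ} (A1 : Matrix (Fin b) (Fin a) ℝ) (b1 : Fin b → ℝ)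
    (A2 : Matrix (Fin c) (Fin b) ℝ) (b2 : Fin c → ℝ) (x : Fin a → ℝ) : Fin c → ℝ :=
  A2.mulVec (fun i => relu (A1.mulVec x i + b1 i)) + b2

/-- Apply a map `φ : ℝ^a → ℝ^c` columnwise to a matrix `X ∈ ℝ^{a×p}`. -/
def colwise {a c p : ℕ} (φ : (Fin a → ℝ) → (Fin c → ℝ))
    (X : Matrix (Fin a) (Fin p) ℝ) : Matrix (Fin c) (Fin p) ℝ :=
  Matrix.of fun i j => φ (fun r => X r j) i

/-- The index set of the quadratic Veronese map on the `n*p` entries of an `n × p` matrix: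
exponent vectors of total degree at most `2`. It has cardinality `(np+2)(np+1)/2`. -/
abbrev QuadIdx (n p : ℕ) : Type := { d : Fin n × Fin p → Fin 3 // ∑ a, (d a : ℕ) ≤ 2 }


namespace QV

/-! ### ReLU lemmas -/

lemma relu_of_nonneg {x : ℝ} (h : 0 ≤ x) : relu x = x := max_eq_left h

lemma relu_nonneg (x : ℝ) : 0 ≤ relu x := le_max_right x 0

@[simp] lemma relu_zero : relu 0 = 0 := max_self 0

lemma relu_sub_relu_neg (x : ℝ) : relu x - relu (-x) = x := by
  rcases le_total 0 x with h | h
  · rw [relu_of_nonneg h, relu, max_eq_right (by linarith)]; ring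
  · rw [relu_of_nonneg (by linarith : (0:ℝ) ≤ -x), relu, max_eq_right h]; ring

/-! ### Realizing a linear map as a one-layer ReLU network -/

def dupM (a : ℕ) : Matrix (Fin (2 * a)) (Fin a) ℝ :=
  Matrix.of fun i r =>
    if (finProdFinEquiv.symm i).2 = r then (if (finProdFinEquiv.symm i).1 = 0 then 1 else -1) else 0

def undupM {a c : ℕ} (L : Matrix (Fin c) (Fin a) ℝ) : Matrix (Fin c) (Fin (2 * a)) ℝ :=
  Matrix.of fun i k =>
    (if (finProdFinEquiv.symm k).1 = 0 then 1 else -1) * L i (finProdFinEquiv.symm k).2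

lemma dup_mulVec (a : ℕ) (x : Fin a → ℝ) (k : Fin (2 * a)) :
    (dupM a).mulVec x k
      = (if (finProdFinEquiv.symm k).1 = 0 then 1 else -1) * x (finProdFinEquiv.symm k).2 := by
  simp only [dupM, Matrix.mulVec, dotProduct, Matrix.of_apply, ite_mul, zero_mul]
  rw [Finset.sum_ite_eq]
  simp

lemma oneLayerNN_linear {a c : ℕ} (L : Matrix (Fin c) (Fin a) ℝ) (x : Fin a → ℝ) :
    oneLayerNN (dupM a) 0 (undupM L) 0 x = L.mulVec x := by
  funext i
  unfold oneLayerNN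
  simp only [Pi.add_apply, Pi.zero_apply, add_zero, dup_mulVec]
  simp only [Matrix.mulVec, dotProduct, undupM, Matrix.of_apply]
  rw [← Equiv.sum_comp (finProdFinEquiv : Fin 2 × Fin a ≃ Fin (2 * a))]
  simp only [Equiv.symm_apply_apply]
  rw [Fintype.sum_prod_type, Finset.sum_comm]
  refine Finset.sum_congr rfl fun r _ => ?_
  rw [Fin.sum_univ_two]
  norm_num
  linear_combination (L i r) * relu_sub_relu_neg (x r)

lemma colwise_oneLayerNN_id {a p : ℕ} (M : Matrix (Fin a) (Fin p) ℝ) :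
    colwise (oneLayerNN (dupM a) 0 (undupM (1 : Matrix (Fin a) (Fin a) ℝ)) 0) M = M := by
  ext i j
  simp [colwise, oneLayerNN_linear, Matrix.one_mulVec]

/-! ### Cardinality of `QuadIdx` -/

def slackEquiv (ι : Type*) [Fintype ι] [DecidableEq ι] :
    { d : ι → Fin 3 // ∑ a, (d a : ℕ) ≤ 2 } ≃ { d : Option ι → Fin 3 // ∑ a, (d a : ℕ) = 2 } where
  toFun d := ⟨fun o => o.elim ⟨2 - ∑ a, (d.1 a : ℕ), by omega⟩ d.1, by
    rw [Fintype.sum_option]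
    have := d.2
    simp only [Option.elim]
    omega⟩
  invFun d := ⟨fun a => d.1 (some a), by
    have := d.2
    rw [Fintype.sum_option] at this
    show ∑ a : ι, (d.1 (some a) : ℕ) ≤ 2
    omega⟩
  left_inv d := by ext a; rfl
  right_inv d := by
    ext o
    cases o with
    | some a => rfl
    | none =>
      have := d.2
      rw [Fintype.sum_option] at this
      simp only [Option.elim]
      omega

def sumTwoEquiv (κ : Type*) [Fintype κ] [DecidableEq κ] :
    { d : κ → Fin 3 // ∑ a, (d a : ℕ) = 2 } ≃ Sym κ 2 where
  toFun d := ⟨Finsupp.toMultiset (Finsupp.equivFunOnFinite.symm fun a => (d.1 a : ℕ)), by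
    rw [Finsupp.card_toMultiset, Finsupp.sum_fintype]
    · simpa using d.2
    · intro; rfl⟩
  invFun m := ⟨fun a => ⟨m.1.count a, by
      have h1 : m.1.count a ≤ Multiset.card m.1 := Multiset.count_le_card a m.1
      have h2 : Multiset.card m.1 = 2 := m.2
      omega⟩, by
    have h2 : Multiset.card m.1 = 2 := m.2
    have : ∑ a : κ, m.1.count a = Multiset.card m.1 := by
      rw [← Multiset.toFinset_sum_count_eq]
      refine (Finset.sum_subset (Finset.subset_univ _) ?_).symm
      intro x _ hx
      simpa [Multiset.count_eq_zero] using hx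
    simp only []
    omega⟩
  left_inv d := by
    ext a
    simp [Finsupp.count_toMultiset]
  right_inv m := by
    ext : 1
    apply Multiset.ext.2
    intro a
    simp [Finsupp.count_toMultiset]

lemma card_quadIdx (n p : ℕ) :
    Fintype.card (QuadIdx n p) = (n * p + 2) * (n * p + 1) / 2 := by
  have e := (slackEquiv (Fin n × Fin p)).trans (sumTwoEquiv (Option (Fin n × Fin p)))
  rw [Fintype.card_congr e, Sym.card_sym_eq_choose]
  simp [Nat.choose_two_right]

def Emap (n p : ℕ) : QuadIdx n p ≃ Fin ((n * p + 2) * (n * p + 1) / 2) :=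
  Fintype.equivFinOfCardEq (card_quadIdx n p)

/-! ### Factoring a monomial of degree at most two -/

def ov {ι : Type*} (X : ι → ℝ) : Option ι → ℝ := fun o => o.elim 1 X

lemma exists_fac {ι : Type*} [Fintype ι] [DecidableEq ι] (e : ι → Fin 3)
    (he : ∑ a, (e a : ℕ) ≤ 2) :
    ∃ f g : Option ι, ∀ X : ι → ℝ, (∏ a, X a ^ (e a : ℕ)) = ov X f * ov X g := by
  classical
  set S : Finset ι := Finset.univ.filter (fun a => (e a : ℕ) ≠ 0) with hS
  have hsum : ∑ a ∈ S, (e a : ℕ) ≤ 2 := by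
    rw [hS, Finset.sum_filter_ne_zero]; exact he
  have hmem : ∀ a ∈ S, 1 ≤ (e a : ℕ) := by
    intro a ha; rw [hS, Finset.mem_filter] at ha; omega
  have hcard : S.card ≤ 2 := by
    calc S.card = ∑ _a ∈ S, 1 := by simp
    _ ≤ ∑ a ∈ S, (e a : ℕ) := Finset.sum_le_sum hmem
    _ ≤ 2 := hsum
  have hprod : ∀ X : ι → ℝ, ∏ a, X a ^ (e a : ℕ) = ∏ a ∈ S, X a ^ (e a : ℕ) := by
    intro X
    refine (Finset.prod_subset (Finset.subset_univ S) ?_).symm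
    intro a _ ha
    rw [hS, Finset.mem_filter] at ha
    push_neg at ha
    have : (e a : ℕ) = 0 := ha (Finset.mem_univ a)
    rw [this, pow_zero]
  interval_cases h : S.card
  · have : S = ∅ := Finset.card_eq_zero.mp h
    refine ⟨none, none, fun X => ?_⟩
    rw [hprod, this]
    simp [ov]
  · obtain ⟨a, ha⟩ := Finset.card_eq_one.mp h
    have h1 : 1 ≤ (e a : ℕ) := hmem a (by simp [ha])
    have h2 : (e a : ℕ) ≤ 2 := by
      have : ∑ x ∈ S, (e x : ℕ) = (e a : ℕ) := by rw [ha, Finset.sum_singleton]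
      omega
    have hpr : ∀ X : ι → ℝ, ∏ x, X x ^ (e x : ℕ) = X a ^ (e a : ℕ) := by
      intro X; rw [hprod, ha, Finset.prod_singleton]
    rcases (by omega : (e a : ℕ) = 1 ∨ (e a : ℕ) = 2) with h' | h'
    · exact ⟨some a, none, fun X => by rw [hpr, h']; simp [ov]⟩
    · exact ⟨some a, some a, fun X => by rw [hpr, h']; simp [ov]; ring⟩
  · obtain ⟨a, b, hab, hS2⟩ := Finset.card_eq_two.mp h
    have ha1 : 1 ≤ (e a : ℕ) := hmem a (by simp [hS2])
    have hb1 : 1 ≤ (e b : ℕ) := hmem b (by simp [hS2])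
    have hsum2 : (e a : ℕ) + (e b : ℕ) ≤ 2 := by
      have : ∑ x ∈ S, (e x : ℕ) = (e a : ℕ) + (e b : ℕ) := by
        rw [hS2, Finset.sum_insert (by simp [hab]), Finset.sum_singleton]
      omega
    have hea : (e a : ℕ) = 1 := by omega
    have heb : (e b : ℕ) = 1 := by omega
    refine ⟨some a, some b, fun X => ?_⟩
    rw [hprod, hS2, Finset.prod_insert (by simp [hab]), Finset.prod_singleton, hea, heb]
    simp [ov]

variable {n p : ℕ}

def fc1 (q : QuadIdx n p) : Option (Fin n × Fin p) := (exists_fac q.1 q.2).choose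

def fc2 (q : QuadIdx n p) : Option (Fin n × Fin p) := (exists_fac q.1 q.2).choose_spec.choose

lemma fc_spec (q : QuadIdx n p) (Y : Fin n × Fin p → ℝ) :
    ∏ a, Y a ^ (q.1 a : ℕ) = ov Y (fc1 q) * ov Y (fc2 q) :=
  (exists_fac q.1 q.2).choose_spec.choose_spec Y

/-! ### The first layer -/

/-- The output of the first layer: row `r = (h, i)` with `h = (j', c)` carries
`X i c` gated by `[j = j']`. -/
def Z1 (n p : ℕ) (X : Matrix (Fin n) (Fin p) ℝ) : Matrix (Fin (p * p * n)) (Fin p) ℝ :=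
  Matrix.of fun r j =>
    if (finProdFinEquiv.symm (finProdFinEquiv.symm r).1).1 = j
    then X (finProdFinEquiv.symm r).2 (finProdFinEquiv.symm (finProdFinEquiv.symm r).1).2
    else 0

def BQ1 (n p : ℕ) : Fin (p * p) → Matrix (Fin 1) (Fin p) ℝ := fun h =>
  Matrix.of fun _ j => if (finProdFinEquiv.symm h).1 = j then 1 else 0

def BK1 (n p : ℕ) : Fin (p * p) → Matrix (Fin 1) (Fin p) ℝ := fun h =>
  Matrix.of fun _ k => if (finProdFinEquiv.symm h).2 = k then 1 else 0

lemma layer1_apply (n p : ℕ) (X : Matrix (Fin n) (Fin p) ℝ) :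
    multiheadAttention (fun _ => (0 : Matrix (Fin 1) (Fin n) ℝ)) (fun _ => 0)
      (fun _ => (1 : Matrix (Fin n) (Fin n) ℝ)) (BQ1 n p) (BK1 n p) (fun _ => 0) X
      = Z1 n p X := by
  ext r j
  unfold multiheadAttention attention
  simp only [Matrix.of_apply, Matrix.zero_mul, Matrix.one_mul, zero_add, add_zero]
  rw [Matrix.mul_apply]
  have hent : ∀ k, matRelu ((BK1 n p (finProdFinEquiv.symm r).1)ᵀ
      * BQ1 n p (finProdFinEquiv.symm r).1) k j
      = (if (finProdFinEquiv.symm (finProdFinEquiv.symm r).1).2 = k then (1:ℝ) else 0)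
        * (if (finProdFinEquiv.symm (finProdFinEquiv.symm r).1).1 = j then 1 else 0) := by
    intro k
    simp only [matRelu, Matrix.of_apply, Matrix.mul_apply, Matrix.transpose_apply,
      BQ1, BK1, Fin.sum_univ_one]
    split_ifs <;> simp [relu_of_nonneg]
  simp_rw [hent]
  simp only [mul_ite, mul_one, mul_zero, ite_mul, zero_mul, one_mul]
  by_cases hA : (finProdFinEquiv.symm (finProdFinEquiv.symm r).1).1 = j
  · simp only [hA, if_true]
    rw [Finset.sum_ite_eq]
    simp only [Finset.mem_univ, if_true, Z1, Matrix.of_apply, if_pos hA]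
  · simp only [hA, if_false, Finset.sum_const_zero, Z1, Matrix.of_apply, if_neg hA]

/-! ### The second layer -/

def selA (n p : ℕ) : Option (Fin n × Fin p) → Matrix (Fin p) (Fin (p * p * n)) ℝ
  | none => 0
  | some a => Matrix.of fun j r =>
      if (finProdFinEquiv.symm (finProdFinEquiv.symm r).1).1 = j ∧
         (finProdFinEquiv.symm (finProdFinEquiv.symm r).1).2 = a.2 ∧
         (finProdFinEquiv.symm r).2 = a.1 then 1 else 0

def selB (n p : ℕ) : Option (Fin n × Fin p) → Matrix (Fin p) (Fin p) ℝ
  | none => 1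
  | some _ => 0

lemma sel_apply (o : Option (Fin n × Fin p)) (X : Matrix (Fin n) (Fin p) ℝ)
    (j k : Fin p) :
    (selA n p o * Z1 n p X + selB n p o) j k
      = if j = k then ov (fun a => X a.1 a.2) o else 0 := by
  cases o with
  | none =>
    simp [selA, selB, Matrix.one_apply, ov]
  | some a =>
    simp only [selA, selB, add_zero, Matrix.mul_apply, Matrix.of_apply, Z1, ov, Option.elim]
    rw [← Equiv.sum_comp (finProdFinEquiv : Fin (p * p) × Fin n ≃ Fin (p * p * n))]
    simp only [Equiv.symm_apply_apply]
    rw [Fintype.sum_prod_type]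
    have inner : ∀ h : Fin (p * p),
        (∑ i : Fin n,
          (if (finProdFinEquiv.symm h).1 = j ∧ (finProdFinEquiv.symm h).2 = a.2 ∧ i = a.1
            then (1:ℝ) else 0)
          * (if (finProdFinEquiv.symm h).1 = k then X i (finProdFinEquiv.symm h).2 else 0))
        = (if (finProdFinEquiv.symm h).1 = j ∧ (finProdFinEquiv.symm h).2 = a.2 then (1:ℝ) else 0)
          * (if (finProdFinEquiv.symm h).1 = k then X a.1 (finProdFinEquiv.symm h).2 else 0) := by
      intro h
      simp only [ite_and, ite_mul, zero_mul, one_mul]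
      by_cases hA : (finProdFinEquiv.symm h).1 = j
      · by_cases hB : (finProdFinEquiv.symm h).2 = a.2
        · simp only [hA, hB, if_true]
          rw [Finset.sum_ite_eq']
          simp
        · simp [hA, hB]
      · simp [hA]
    simp_rw [inner]
    rw [← Equiv.sum_comp (finProdFinEquiv : Fin p × Fin p ≃ Fin (p * p))]
    simp only [Equiv.symm_apply_apply]
    rw [Fintype.sum_prod_type]
    have inner2 : ∀ j' : Fin p,
        (∑ c : Fin p, (if j' = j ∧ c = a.2 then (1:ℝ) else 0)
          * (if j' = k then X a.1 c else 0))
        = (if j' = j then 1 else 0) * (if j' = k then X a.1 a.2 else 0) := by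
      intro j'
      by_cases h1 : j' = j
      · by_cases h2 : j' = k
        · simp only [h1, h2, if_true, true_and, one_mul, ite_mul, zero_mul]
          rw [Finset.sum_ite_eq']
          simp
        · simp [h1, h2]
      · simp [h1]
    simp_rw [inner2]
    have inner3 : ∀ j' : Fin p,
        (if j' = j then (1:ℝ) else 0) * (if j' = k then X a.1 a.2 else 0)
        = if j' = j then (if j = k then X a.1 a.2 else 0) else 0 := by
      intro j'
      split_ifs <;> simp_all
    simp_rw [inner3]
    rw [Finset.sum_ite_eq']
    simp

def sg : Fin 2 → ℝ := fun s => if s = 0 then 1 else -1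

abbrev NN (n p : ℕ) : ℕ := (n * p + 2) * (n * p + 1) / 2

def headIdx (n p : ℕ) (t : Fin (2 * NN n p)) : Fin 2 × QuadIdx n p :=
  ((finProdFinEquiv.symm t).1, (Emap n p).symm (finProdFinEquiv.symm t).2)

def AK2 (n p : ℕ) : Fin (2 * NN n p) → Matrix (Fin p) (Fin (p * p * n)) ℝ := fun t =>
  selA n p (fc1 (headIdx n p t).2)

def BK2 (n p : ℕ) : Fin (2 * NN n p) → Matrix (Fin p) (Fin p) ℝ := fun t =>
  selB n p (fc1 (headIdx n p t).2)

def AQ2 (n p : ℕ) : Fin (2 * NN n p) → Matrix (Fin p) (Fin (p * p * n)) ℝ := fun t =>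
  sg (headIdx n p t).1 • selA n p (fc2 (headIdx n p t).2)

def BQ2 (n p : ℕ) : Fin (2 * NN n p) → Matrix (Fin p) (Fin p) ℝ := fun t =>
  sg (headIdx n p t).1 • selB n p (fc2 (headIdx n p t).2)

lemma layer2_apply (n p : ℕ) (X : Matrix (Fin n) (Fin p) ℝ)
    (u : Fin (2 * NN n p * p)) (j : Fin p) :
    multiheadAttention (AQ2 n p) (AK2 n p) (fun _ => (0 : Matrix (Fin p) (Fin (p * p * n)) ℝ))
      (BQ2 n p) (BK2 n p) (fun _ => (1 : Matrix (Fin p) (Fin p) ℝ)) (Z1 n p X) u j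
    = if (finProdFinEquiv.symm u).2 = j
      then relu (sg (headIdx n p (finProdFinEquiv.symm u).1).1
        * (ov (fun a => X a.1 a.2) (fc1 (headIdx n p (finProdFinEquiv.symm u).1).2)
          * ov (fun a => X a.1 a.2) (fc2 (headIdx n p (finProdFinEquiv.symm u).1).2)))
      else 0 := by
  set t := (finProdFinEquiv.symm u).1 with ht
  set i := (finProdFinEquiv.symm u).2 with hi
  set q := (headIdx n p t).2 with hq
  set s := (headIdx n p t).1 with hs
  set Xv : Fin n × Fin p → ℝ := fun a => X a.1 a.2 with hXv
  unfold multiheadAttention attention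
  simp only [Matrix.of_apply, ← ht, ← hi]
  rw [show AQ2 n p t * Z1 n p X + BQ2 n p t
      = sg s • (selA n p (fc2 q) * Z1 n p X + selB n p (fc2 q)) by
    rw [AQ2, BQ2, Matrix.smul_mul, smul_add, ← hq, ← hs]]
  rw [show AK2 n p t * Z1 n p X + BK2 n p t
      = selA n p (fc1 q) * Z1 n p X + selB n p (fc1 q) by rw [AK2, BK2, ← hq]]
  rw [Matrix.zero_mul, zero_add, Matrix.one_mul]
  simp only [matRelu, Matrix.of_apply, Matrix.mul_apply, Matrix.transpose_apply,
    Matrix.smul_apply, sel_apply, smul_eq_mul]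
  have : ∀ x : Fin p,
      (if x = i then ov (fun a => X a.1 a.2) (fc1 q) else 0) * (sg s * (if x = j then ov (fun a => X a.1 a.2) (fc2 q) else 0))
      = if x = i then (if x = j then sg s * (ov Xv (fc1 q) * ov Xv (fc2 q)) else 0) else 0 := by
    intro x
    split_ifs <;> ring
  simp_rw [this]
  rw [Finset.sum_ite_eq' Finset.univ i]
  simp only [Finset.mem_univ, if_true]
  split_ifs with h1
  · rfl
  · exact relu_zero

lemma relu_relu (x : ℝ) : relu (relu x) = relu x := relu_of_nonneg (relu_nonneg x)

def A2' (n p : ℕ) :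
    Matrix (Fin (p * ((n * p + 2) * (n * p + 1) / 2))) (Fin (2 * NN n p * p)) ℝ :=
  Matrix.of fun i u =>
    if (finProdFinEquiv.symm (finProdFinEquiv.symm u).1).2 = (finProdFinEquiv.symm i).2 ∧
       (finProdFinEquiv.symm u).2 = (finProdFinEquiv.symm i).1
    then sg (finProdFinEquiv.symm (finProdFinEquiv.symm u).1).1 else 0

end QV

/-- There is a two-layer ReLU encoder `ε₂ = φ₂ ∘ α₂ ∘ φ₁ ∘ α₁` — multihead ReLU attention
modules `α₁, α₂` and one-layer ReLU feed-forward neural networks `φ₁, φ₂` applied columnwise —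
such that for every `X ∈ ℝ^{n×p}`, `ε₂(X)` is the block-diagonal matrix with `p` diagonal
blocks, each equal to the quadratic Veronese vector `v₂(X) ∈ ℝ^{(np+2)(np+1)/2}` of all
monomials of degree at most two in the entries of `X` (in some fixed order, given by a
bijection `E`).  In particular every such monomial appears in every column of `ε₂(X)`. -/
theorem quadratic_veronese_is_two_layer_encoder (n p : ℕ) :
    ∃ (d₁ m₁ h₁ w₁ q₁ d₂ m₂ h₂ w₂ : ℕ)
      (AQ₁ AK₁ : Fin h₁ → Matrix (Fin d₁) (Fin n) ℝ)
      (AV₁ : Fin h₁ → Matrix (Fin m₁) (Fin n) ℝ)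
      (BQ₁ BK₁ : Fin h₁ → Matrix (Fin d₁) (Fin p) ℝ)
      (BV₁ : Fin h₁ → Matrix (Fin m₁) (Fin p) ℝ)
      (A₁ : Matrix (Fin w₁) (Fin (h₁ * m₁)) ℝ) (c₁ : Fin w₁ → ℝ)
      (A₁' : Matrix (Fin q₁) (Fin w₁) ℝ) (c₁' : Fin q₁ → ℝ)
      (AQ₂ AK₂ : Fin h₂ → Matrix (Fin d₂) (Fin q₁) ℝ)
      (AV₂ : Fin h₂ → Matrix (Fin m₂) (Fin q₁) ℝ)
      (BQ₂ BK₂ : Fin h₂ → Matrix (Fin d₂) (Fin p) ℝ)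
      (BV₂ : Fin h₂ → Matrix (Fin m₂) (Fin p) ℝ)
      (A₂ : Matrix (Fin w₂) (Fin (h₂ * m₂)) ℝ) (c₂ : Fin w₂ → ℝ)
      (A₂' : Matrix (Fin (p * ((n * p + 2) * (n * p + 1) / 2))) (Fin w₂) ℝ)
      (c₂' : Fin (p * ((n * p + 2) * (n * p + 1) / 2)) → ℝ)
      (E : QuadIdx n p ≃ Fin ((n * p + 2) * (n * p + 1) / 2)),
      ∀ (X : Matrix (Fin n) (Fin p) ℝ)
        (i : Fin (p * ((n * p + 2) * (n * p + 1) / 2))) (j : Fin p),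
        colwise (oneLayerNN A₂ c₂ A₂' c₂')
          (multiheadAttention AQ₂ AK₂ AV₂ BQ₂ BK₂ BV₂
            (colwise (oneLayerNN A₁ c₁ A₁' c₁')
              (multiheadAttention AQ₁ AK₁ AV₁ BQ₁ BK₁ BV₁ X))) i j
          = if (finProdFinEquiv.symm i).1 = j
              then ∏ a : Fin n × Fin p,
                X a.1 a.2 ^ ((E.symm (finProdFinEquiv.symm i).2).1 a : ℕ)
              else 0 := by
  classical
  refine ⟨1, n, p * p, 2 * (p * p * n), p * p * n, p, p, 2 * QV.NN n p, 2 * QV.NN n p * p,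
    (fun _ => 0), (fun _ => 0), (fun _ => 1), QV.BQ1 n p, QV.BK1 n p, (fun _ => 0),
    QV.dupM (p * p * n), 0, QV.undupM (1 : Matrix (Fin (p * p * n)) (Fin (p * p * n)) ℝ), 0,
    QV.AQ2 n p, QV.AK2 n p, (fun _ => 0), QV.BQ2 n p, QV.BK2 n p, (fun _ => 1),
    (1 : Matrix (Fin (2 * QV.NN n p * p)) (Fin (2 * QV.NN n p * p)) ℝ), 0,
    QV.A2' n p, 0, QV.Emap n p, ?_⟩
  intro X i j
  rw [QV.layer1_apply n p X, QV.colwise_oneLayerNN_id]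
  set Xv : Fin n × Fin p → ℝ := fun a => X a.1 a.2 with hXv
  set v : Fin (QV.NN n p) → ℝ :=
    fun κ => QV.ov Xv (QV.fc1 ((QV.Emap n p).symm κ)) * QV.ov Xv (QV.fc2 ((QV.Emap n p).symm κ))
    with hv
  set j' := (finProdFinEquiv.symm i).1 with hj'
  set κ' := (finProdFinEquiv.symm i).2 with hκ'
  simp only [colwise, Matrix.of_apply, oneLayerNN, Matrix.one_mulVec, Pi.add_apply,
    Pi.zero_apply, add_zero]
  simp only [Matrix.mulVec, dotProduct]
  have hW : ∀ u : Fin (2 * QV.NN n p * p),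
      relu (multiheadAttention (QV.AQ2 n p) (QV.AK2 n p) (fun _ => 0) (QV.BQ2 n p)
        (QV.BK2 n p) (fun _ => 1) (QV.Z1 n p X) u j)
      = if (finProdFinEquiv.symm u).2 = j
        then relu (QV.sg (QV.headIdx n p (finProdFinEquiv.symm u).1).1
          * (QV.ov Xv (QV.fc1 (QV.headIdx n p (finProdFinEquiv.symm u).1).2)
            * QV.ov Xv (QV.fc2 (QV.headIdx n p (finProdFinEquiv.symm u).1).2)))
        else 0 := by
    intro u
    rw [QV.layer2_apply n p X u j]
    split_ifs
    · exact QV.relu_relu _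
    · exact QV.relu_zero
  simp_rw [hW]
  simp only [QV.A2', Matrix.of_apply, QV.headIdx]
  rw [← Equiv.sum_comp
    (finProdFinEquiv : Fin (2 * QV.NN n p) × Fin p ≃ Fin (2 * QV.NN n p * p))]
  simp only [Equiv.symm_apply_apply]
  rw [Fintype.sum_prod_type]
  rw [← Equiv.sum_comp (finProdFinEquiv : Fin 2 × Fin (QV.NN n p) ≃ Fin (2 * QV.NN n p))]
  simp only [Equiv.symm_apply_apply]
  rw [Fintype.sum_prod_type]
  have key : ∀ (s : Fin 2) (κ : Fin (QV.NN n p)) (k : Fin p),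
      (if κ = κ' ∧ k = j' then QV.sg s else 0)
        * (if k = j then relu (QV.sg s
            * (QV.ov Xv (QV.fc1 ((QV.Emap n p).symm κ))
              * QV.ov Xv (QV.fc2 ((QV.Emap n p).symm κ)))) else 0)
      = if k = j' then (if κ = κ' ∧ j' = j then QV.sg s * relu (QV.sg s * v κ) else 0)
        else 0 := by
    intro s κ k
    rw [hv]
    by_cases hk : k = j'
    · by_cases h1 : κ = κ' <;> by_cases h2 : j' = j <;> simp_all
    · simp [hk]
  simp only [← hj', ← hκ']
  simp_rw [key]
  have hsum1 : ∀ (s : Fin 2) (κ : Fin (QV.NN n p)),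
      (∑ k : Fin p, if k = j' then (if κ = κ' ∧ j' = j
        then QV.sg s * relu (QV.sg s * v κ) else 0) else 0)
      = if κ = κ' then (if j' = j then QV.sg s * relu (QV.sg s * v κ) else 0) else 0 := by
    intro s κ
    rw [Finset.sum_ite_eq']
    simp [ite_and]
  simp_rw [hsum1]
  have hsum2 : ∀ s : Fin 2,
      (∑ κ : Fin (QV.NN n p), if κ = κ'
        then (if j' = j then QV.sg s * relu (QV.sg s * v κ) else 0) else 0)
      = if j' = j then QV.sg s * relu (QV.sg s * v κ') else 0 := by
    intro s
    rw [Finset.sum_ite_eq']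
    simp
  simp_rw [hsum2]
  rw [Fin.sum_univ_two]
  have hsg0 : QV.sg 0 = 1 := rfl
  have hsg1 : QV.sg 1 = -1 := rfl
  rw [hsg0, hsg1]
  by_cases hj : j' = j
  · simp only [hj, if_true, one_mul, neg_one_mul]
    have hval : v κ' = ∏ a : Fin n × Fin p, X a.1 a.2 ^ (((QV.Emap n p).symm κ').1 a : ℕ) := by
      rw [hv]
      exact (QV.fc_spec ((QV.Emap n p).symm κ') Xv).symm
    rw [← hval]
    linear_combination QV.relu_sub_relu_neg (v κ')
  · simp [hj]
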